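/- Let l and be a positive integer and let s ≥ r ≥ 0 be real numbers with 2l > s + 1. Then there exists a constant C > 0, depending only on l, s, r, such that for every positive integer n: ∫_0^π J_{l,n}(t) t^s dt ≤ C n^{-(s−r)} ∫_0^π J_{l,n}(t) t^r dt. -/

import Mathlib

open MeasureTheory Real Set
open intervalIntegral in
private lemma s8_ii_rpow {a b : ℝ} {e : ℝ} (h : -1 < e ∨ e ≠ -1 ∧ (0:ℝ) ∉ Set.uIcc a b) :
    ∫ x in a..b, x ^ e = (b ^ (e + 1) - a ^ (e + 1)) / (e + 1) := integral_rpow h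

private lemma s8_rpow_int {a b e : ℝ} (ha : 0 < a) (hab : a ≤ b) (he : e ≠ -1) :
    ∫ t in Ioo a b, t ^ e = (b ^ (e + 1) - a ^ (e + 1)) / (e + 1) := by
  rw [← integral_Ioc_eq_integral_Ioo, ← intervalIntegral.integral_of_le (f := fun t : ℝ => t ^ e) (μ := volume) hab,
    s8_ii_rpow (Or.inr ⟨he, by
      rw [Set.uIcc_of_le hab]
      intro h
      exact absurd h.1 (not_le.mpr ha)⟩)]

private lemma s8_rpow_int0 {a e : ℝ} (ha : 0 < a) (he : -1 < e) :
    ∫ t in Ioo (0:ℝ) a, t ^ e = a ^ (e + 1) / (e + 1) := by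
  rw [← integral_Ioc_eq_integral_Ioo, ← intervalIntegral.integral_of_le (f := fun t : ℝ => t ^ e) (μ := volume) ha.le,
    s8_ii_rpow (Or.inl he), Real.zero_rpow (by linarith), sub_zero]

private lemma s8_sin_half {t : ℝ} (ht : 0 < t) (ht' : t < Real.pi) :
    0 < Real.sin (t / 2) ∧ t / Real.pi ≤ Real.sin (t / 2) := by
  have hπ := Real.pi_pos
  refine ⟨Real.sin_pos_of_pos_of_lt_pi (by linarith) (by linarith), ?_⟩
  have h := Real.mul_le_sin (x := t/2) (by linarith) (by linarith)
  calc t / Real.pi = 2 / Real.pi * (t/2) := by field_simp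
  _ ≤ Real.sin (t/2) := h

private lemma s8_ratio_le {c t : ℝ} (hc : 0 ≤ c) (ht : 0 < t) (ht' : t < Real.pi) :
    |Real.sin (c * t / 2) / Real.sin (t / 2)| ≤ c * Real.pi / 2 := by
  obtain ⟨h1, h2⟩ := s8_sin_half ht ht'
  have hπ := Real.pi_pos
  rw [abs_div, abs_of_pos h1, div_le_iff₀ h1]
  calc |Real.sin (c * t / 2)| ≤ |c * t / 2| := Real.abs_sin_le_abs
    _ = c * t / 2 := abs_of_nonneg (by positivity)
    _ = c * Real.pi / 2 * (t / Real.pi) := by field_simp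
    _ ≤ c * Real.pi / 2 * Real.sin (t/2) := by
        apply mul_le_mul_of_nonneg_left h2 (by positivity)

private lemma s8_ratio_le' {c t : ℝ} (ht : 0 < t) (ht' : t < Real.pi) :
    |Real.sin (c * t / 2) / Real.sin (t / 2)| ≤ Real.pi / t := by
  obtain ⟨h1, h2⟩ := s8_sin_half ht ht'
  have hπ := Real.pi_pos
  rw [abs_div, abs_of_pos h1, div_le_div_iff₀ h1 ht]
  calc |Real.sin (c*t/2)| * t ≤ 1 * t := by
        apply mul_le_mul_of_nonneg_right (abs_le.mpr ⟨Real.neg_one_le_sin _, Real.sin_le_one _⟩) ht.le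
    _ = Real.pi * (t / Real.pi) := by field_simp
    _ ≤ Real.pi * Real.sin (t/2) := mul_le_mul_of_nonneg_left h2 hπ.le

private lemma s8_ratio_ge {c t : ℝ} (hc : 1 ≤ c) (ht : 0 < t) (htc : c * t ≤ 1) :
    2 * c / Real.pi ≤ Real.sin (c * t / 2) / Real.sin (t / 2) := by
  have hπ := Real.pi_pos
  have hπ3 : 3 < Real.pi := Real.pi_gt_three
  have ht' : t < Real.pi := by nlinarith
  obtain ⟨h1, -⟩ := s8_sin_half ht ht'
  have h2 : Real.sin (t/2) ≤ t/2 := Real.sin_le (by linarith)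
  have h3 : c * t / Real.pi ≤ Real.sin (c * t / 2) := by
    have h := Real.mul_le_sin (x := c*t/2) (by nlinarith) (by nlinarith)
    calc c * t / Real.pi = 2 / Real.pi * (c*t/2) := by field_simp
    _ ≤ Real.sin (c*t/2) := h
  rw [le_div_iff₀ h1]
  calc 2*c/Real.pi * Real.sin (t/2) ≤ 2*c/Real.pi * (t/2) := by
        apply mul_le_mul_of_nonneg_left h2 (by positivity)
    _ = c * t / Real.pi := by field_simp
    _ ≤ Real.sin (c*t/2) := h3

/-- Moment estimate for the generalized Jackson kernel
`J_{l,n}(t) = (sin((n+1)t/2)/sin(t/2))^{2l}`: if `s ≥ r ≥ 0` and `2l > s + 1`, there is a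
constant `C > 0` (depending only on `l, s, r`) with
`∫_0^π J_{l,n}(t) t^s dt ≤ C n^{-(s-r)} ∫_0^π J_{l,n}(t) t^r dt` for every `n ≥ 1`. -/
theorem statement8 (l : ℕ) (hl : 1 ≤ l) (s r : ℝ) (hr : 0 ≤ r) (hrs : r ≤ s)
    (hls : s + 1 < 2 * (l : ℝ)) :
    ∃ C : ℝ, 0 < C ∧ ∀ n : ℕ, 1 ≤ n →
      (∫ t in Set.Ioo (0 : ℝ) Real.pi,
          (Real.sin (((n : ℝ) + 1) * t / 2) / Real.sin (t / 2)) ^ (2 * l) * t ^ s) ≤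
        C * (n : ℝ) ^ (-(s - r)) *
          ∫ t in Set.Ioo (0 : ℝ) Real.pi,
            (Real.sin (((n : ℝ) + 1) * t / 2) / Real.sin (t / 2)) ^ (2 * l) * t ^ r := by
  have hπ := Real.pi_pos
  have hπ3 : 3 < Real.pi := Real.pi_gt_three
  have hs0 : 0 ≤ s := le_trans hr hrs
  set d : ℝ := 2 * (l : ℝ) - s - 1 with hd
  have hd0 : 0 < d := by rw [hd]; linarith
  set c₀ : ℝ := (2 / Real.pi) ^ (2 * l) / (r + 1) with hc₀
  have hc₀0 : 0 < c₀ := by rw [hc₀]; positivity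
  refine ⟨1 + Real.pi ^ (2 * l) / (d * c₀), by positivity, ?_⟩
  intro n hn
  have hN1 : (1 : ℝ) ≤ (n : ℝ) := by exact_mod_cast hn
  have hN0 : (0 : ℝ) < (n : ℝ) := by linarith
  set N : ℝ := (n : ℝ) with hNdef
  -- measurability
  have hmeas : ∀ e : ℝ, Measurable fun t : ℝ =>
      (Real.sin ((N + 1) * t / 2) / Real.sin (t / 2)) ^ (2 * l) * t ^ e := by
    intro e
    apply Measurable.mul
    · apply Measurable.pow_const
      exact (Real.measurable_sin.comp (by fun_prop)).div
        (Real.measurable_sin.comp (by fun_prop))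
    · fun_prop
  -- integrability
  have hbound : ∀ e : ℝ, 0 ≤ e →
      MeasureTheory.IntegrableOn
        (fun t => (Real.sin ((N + 1) * t / 2) / Real.sin (t / 2)) ^ (2 * l) * t ^ e)
        (Set.Ioo (0 : ℝ) Real.pi) := by
    intro e he
    apply MeasureTheory.Measure.integrableOn_of_bounded
      (M := ((N + 1) * Real.pi / 2) ^ (2 * l) * Real.pi ^ e)
    · simp [Real.volume_Ioo]
    · exact (hmeas e).aestronglyMeasurable
    · filter_upwards [MeasureTheory.ae_restrict_mem measurableSet_Ioo] with t ht
      obtain ⟨ht0, htπ⟩ := ht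
      have h1 := s8_ratio_le (c := N + 1) (by linarith) ht0 htπ
      rw [Real.norm_eq_abs, abs_mul, abs_pow]
      have ht_e : |t ^ e| ≤ Real.pi ^ e := by
        rw [abs_of_nonneg (Real.rpow_nonneg ht0.le e)]
        exact Real.rpow_le_rpow ht0.le htπ.le he
      have hq_e : |Real.sin ((N + 1) * t / 2) / Real.sin (t / 2)| ^ (2 * l)
          ≤ ((N + 1) * Real.pi / 2) ^ (2 * l) :=
        pow_le_pow_left₀ (abs_nonneg _) h1 _
      exact mul_le_mul hq_e ht_e (abs_nonneg _) (by positivity)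
  have hIs := hbound s hs0
  have hIr := hbound r hr
  -- a.e. nonnegativity
  have hnn : ∀ e : ℝ,
      (0 : ℝ → ℝ) ≤ᵐ[MeasureTheory.volume.restrict (Set.Ioo (0 : ℝ) Real.pi)]
        fun t => (Real.sin ((N + 1) * t / 2) / Real.sin (t / 2)) ^ (2 * l) * t ^ e := by
    intro e
    filter_upwards [MeasureTheory.ae_restrict_mem measurableSet_Ioo] with t ht
    exact mul_nonneg ((even_two_mul l).pow_nonneg _) (Real.rpow_nonneg ht.1.le e)
  -- splitting
  have hinv0 : (0 : ℝ) < N⁻¹ := by positivity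
  have hinv1 : N⁻¹ ≤ 1 := by
    have h := mul_le_mul_of_nonneg_left hN1 (le_of_lt hinv0)
    rwa [mul_one, inv_mul_cancel₀ hN0.ne'] at h
  have hinvπ : N⁻¹ < Real.pi := by linarith
  have hsplit : Set.Ioc (0 : ℝ) N⁻¹ ∪ Set.Ioo N⁻¹ Real.pi = Set.Ioo 0 Real.pi :=
    Set.Ioc_union_Ioo_eq_Ioo hinv0.le hinvπ
  have hsub1 : Set.Ioc (0 : ℝ) N⁻¹ ⊆ Set.Ioo 0 Real.pi := hsplit ▸ Set.subset_union_left
  have hsub2 : Set.Ioo N⁻¹ Real.pi ⊆ Set.Ioo 0 Real.pi := hsplit ▸ Set.subset_union_right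
  have hdisj : Disjoint (Set.Ioc (0 : ℝ) N⁻¹) (Set.Ioo N⁻¹ Real.pi) := by
    rw [Set.disjoint_left]
    rintro x ⟨-, h1⟩ ⟨h2, -⟩
    linarith
  have hA : (∫ t in Set.Ioo (0 : ℝ) Real.pi,
        (Real.sin ((N + 1) * t / 2) / Real.sin (t / 2)) ^ (2 * l) * t ^ s)
      = (∫ t in Set.Ioc (0 : ℝ) N⁻¹,
          (Real.sin ((N + 1) * t / 2) / Real.sin (t / 2)) ^ (2 * l) * t ^ s)
        + ∫ t in Set.Ioo N⁻¹ Real.pi,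
            (Real.sin ((N + 1) * t / 2) / Real.sin (t / 2)) ^ (2 * l) * t ^ s := by
    rw [← hsplit, MeasureTheory.setIntegral_union hdisj measurableSet_Ioo
      (hIs.mono_set hsub1) (hIs.mono_set hsub2)]
  -- Term 1
  have hT1 : (∫ t in Set.Ioc (0 : ℝ) N⁻¹,
        (Real.sin ((N + 1) * t / 2) / Real.sin (t / 2)) ^ (2 * l) * t ^ s)
      ≤ N ^ (-(s - r)) * ∫ t in Set.Ioo (0 : ℝ) Real.pi,
          (Real.sin ((N + 1) * t / 2) / Real.sin (t / 2)) ^ (2 * l) * t ^ r := by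
    have step1 : (∫ t in Set.Ioc (0 : ℝ) N⁻¹,
          (Real.sin ((N + 1) * t / 2) / Real.sin (t / 2)) ^ (2 * l) * t ^ s)
        ≤ ∫ t in Set.Ioc (0 : ℝ) N⁻¹,
            N ^ (-(s - r)) *
              ((Real.sin ((N + 1) * t / 2) / Real.sin (t / 2)) ^ (2 * l) * t ^ r) := by
      apply MeasureTheory.setIntegral_mono_on (hIs.mono_set hsub1)
        ((hIr.mono_set hsub1).const_mul _) measurableSet_Ioc
      rintro t ⟨ht0, ht1⟩
      have hts : t ^ s = t ^ r * t ^ (s - r) := by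
        rw [← Real.rpow_add ht0]; congr 1; ring
      have h2 : t ^ (s - r) ≤ N ^ (-(s - r)) := by
        have hX : N ^ (-(s - r)) = (N⁻¹ : ℝ) ^ (s - r) := by
          rw [Real.rpow_neg hN0.le, ← Real.inv_rpow hN0.le]
        rw [hX]
        exact Real.rpow_le_rpow ht0.le ht1 (by linarith)
      calc (Real.sin ((N + 1) * t / 2) / Real.sin (t / 2)) ^ (2 * l) * t ^ s
          = t ^ (s - r) *
              ((Real.sin ((N + 1) * t / 2) / Real.sin (t / 2)) ^ (2 * l) * t ^ r) := by
            rw [hts]; ring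
        _ ≤ N ^ (-(s - r)) *
              ((Real.sin ((N + 1) * t / 2) / Real.sin (t / 2)) ^ (2 * l) * t ^ r) := by
            apply mul_le_mul_of_nonneg_right h2
            exact mul_nonneg ((even_two_mul l).pow_nonneg _) (Real.rpow_nonneg ht0.le r)
    rw [MeasureTheory.integral_const_mul] at step1
    refine step1.trans ?_
    apply mul_le_mul_of_nonneg_left ?_ (Real.rpow_nonneg hN0.le _)
    exact MeasureTheory.setIntegral_mono_set hIr (hnn r) (hsub1.eventuallyLE)
  -- Term 2
  have hT2 : (∫ t in Set.Ioo N⁻¹ Real.pi,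
        (Real.sin ((N + 1) * t / 2) / Real.sin (t / 2)) ^ (2 * l) * t ^ s)
      ≤ Real.pi ^ (2 * l) * (N ^ d / d) := by
    have hrpowint : MeasureTheory.IntegrableOn (fun t : ℝ => t ^ (s - 2 * (l : ℝ)))
        (Set.Ioo N⁻¹ Real.pi) := by
      rw [← intervalIntegrable_iff_integrableOn_Ioo_of_le hinvπ.le]
      apply intervalIntegral.intervalIntegrable_rpow (Or.inr ?_)
      rw [Set.uIcc_of_le hinvπ.le]
      rintro ⟨h1, -⟩
      exact absurd h1 (not_le.mpr hinv0)
    have step1 : (∫ t in Set.Ioo N⁻¹ Real.pi,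
          (Real.sin ((N + 1) * t / 2) / Real.sin (t / 2)) ^ (2 * l) * t ^ s)
        ≤ ∫ t in Set.Ioo N⁻¹ Real.pi, Real.pi ^ (2 * l) * t ^ (s - 2 * (l : ℝ)) := by
      apply MeasureTheory.setIntegral_mono_on (hIs.mono_set hsub2)
        (MeasureTheory.Integrable.const_mul hrpowint _) measurableSet_Ioo
      rintro t ⟨ht1, ht2⟩
      have ht0 : 0 < t := lt_trans hinv0 ht1
      have hratio := s8_ratio_le' (c := N + 1) ht0 ht2
      have hqle : (Real.sin ((N + 1) * t / 2) / Real.sin (t / 2)) ^ (2 * l)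
          ≤ (Real.pi / t) ^ (2 * l) := by
        calc (Real.sin ((N + 1) * t / 2) / Real.sin (t / 2)) ^ (2 * l)
            = |Real.sin ((N + 1) * t / 2) / Real.sin (t / 2)| ^ (2 * l) :=
              ((even_two_mul l).pow_abs _).symm
          _ ≤ (Real.pi / t) ^ (2 * l) := pow_le_pow_left₀ (abs_nonneg _) hratio _
      have key : (Real.pi / t) ^ (2 * l) * t ^ s
          = Real.pi ^ (2 * l) * t ^ (s - 2 * (l : ℝ)) := by
        have htl : t ^ ((2 * l : ℕ) : ℝ) = t ^ (2 * l : ℕ) := Real.rpow_natCast t (2 * l)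
        have hcast : ((2 * l : ℕ) : ℝ) = 2 * (l : ℝ) := by push_cast; ring
        rw [Real.rpow_sub ht0, div_pow, ← htl, hcast]
        have hne : t ^ (2 * (l : ℝ)) ≠ 0 := (Real.rpow_pos_of_pos ht0 _).ne'
        field_simp
      calc (Real.sin ((N + 1) * t / 2) / Real.sin (t / 2)) ^ (2 * l) * t ^ s
          ≤ (Real.pi / t) ^ (2 * l) * t ^ s :=
            mul_le_mul_of_nonneg_right hqle (Real.rpow_nonneg ht0.le _)
        _ = Real.pi ^ (2 * l) * t ^ (s - 2 * (l : ℝ)) := key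
    refine step1.trans ?_
    rw [MeasureTheory.integral_const_mul,
      s8_rpow_int hinv0 hinvπ.le (by intro h; rw [hd] at hd0; linarith)]
    apply mul_le_mul_of_nonneg_left ?_ (by positivity)
    have he1 : s - 2 * (l : ℝ) + 1 = -d := by rw [hd]; ring
    have hNinv : (N⁻¹ : ℝ) ^ (-d) = N ^ d := by
      rw [Real.inv_rpow hN0.le, Real.rpow_neg hN0.le, inv_inv]
    rw [he1, hNinv]
    have hπd : 0 < Real.pi ^ (-d) := Real.rpow_pos_of_pos hπ _
    have hrw : (Real.pi ^ (-d) - N ^ d) / (-d) = (N ^ d - Real.pi ^ (-d)) / d := by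
      rw [div_neg, ← neg_div, neg_sub]
    rw [hrw, div_le_div_iff₀ hd0 hd0]
    nlinarith [hπd, hd0, Real.rpow_pos_of_pos hN0 d]
  -- Lower bound for the r-integral
  have hBlow : c₀ * N ^ (2 * (l : ℝ) - r - 1)
      ≤ ∫ t in Set.Ioo (0 : ℝ) Real.pi,
          (Real.sin ((N + 1) * t / 2) / Real.sin (t / 2)) ^ (2 * l) * t ^ r := by
    have hN1' : (0 : ℝ) < N + 1 := by linarith
    have ha0 : (0 : ℝ) < (N + 1)⁻¹ := by positivity
    have ha2 : (N + 1)⁻¹ * 2 ≤ 1 := by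
      have h := mul_le_mul_of_nonneg_left (show (2:ℝ) ≤ N + 1 by linarith) ha0.le
      rwa [inv_mul_cancel₀ hN1'.ne'] at h
    have haπ : (N + 1)⁻¹ < Real.pi := by linarith
    have hsub : Set.Ioo (0 : ℝ) (N + 1)⁻¹ ⊆ Set.Ioo 0 Real.pi :=
      Set.Ioo_subset_Ioo le_rfl haπ.le
    have hconstint : MeasureTheory.IntegrableOn
        (fun t : ℝ => (2 * (N + 1) / Real.pi) ^ (2 * l) * t ^ r)
        (Set.Ioo (0 : ℝ) (N + 1)⁻¹) := by
      have hri : MeasureTheory.IntegrableOn (fun t : ℝ => t ^ r)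
          (Set.Ioo (0 : ℝ) (N + 1)⁻¹) := by
        rw [← intervalIntegrable_iff_integrableOn_Ioo_of_le ha0.le]
        exact intervalIntegral.intervalIntegrable_rpow' (by linarith)
      exact MeasureTheory.Integrable.const_mul hri _
    have step0 : (∫ t in Set.Ioo (0 : ℝ) (N + 1)⁻¹,
          (2 * (N + 1) / Real.pi) ^ (2 * l) * t ^ r)
        ≤ ∫ t in Set.Ioo (0 : ℝ) (N + 1)⁻¹,
            (Real.sin ((N + 1) * t / 2) / Real.sin (t / 2)) ^ (2 * l) * t ^ r := by
      apply MeasureTheory.setIntegral_mono_on hconstint (hIr.mono_set hsub) measurableSet_Ioo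
      rintro t ⟨ht0, hta⟩
      have htc : (N + 1) * t ≤ 1 := by
        have h := mul_le_mul_of_nonneg_left hta.le (le_of_lt hN1')
        rwa [mul_inv_cancel₀ hN1'.ne'] at h
      have hge := s8_ratio_ge (c := N + 1) (by linarith) ht0 htc
      apply mul_le_mul_of_nonneg_right ?_ (Real.rpow_nonneg ht0.le r)
      exact pow_le_pow_left₀ (by positivity) hge _
    have step1 : (∫ t in Set.Ioo (0 : ℝ) (N + 1)⁻¹,
          (2 * (N + 1) / Real.pi) ^ (2 * l) * t ^ r)
        = (2 * (N + 1) / Real.pi) ^ (2 * l) * ((N + 1)⁻¹ ^ (r + 1) / (r + 1)) := by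
      rw [MeasureTheory.integral_const_mul, s8_rpow_int0 ha0 (by linarith)]
    have step2 : (∫ t in Set.Ioo (0 : ℝ) (N + 1)⁻¹,
          (Real.sin ((N + 1) * t / 2) / Real.sin (t / 2)) ^ (2 * l) * t ^ r)
        ≤ ∫ t in Set.Ioo (0 : ℝ) Real.pi,
            (Real.sin ((N + 1) * t / 2) / Real.sin (t / 2)) ^ (2 * l) * t ^ r :=
      MeasureTheory.setIntegral_mono_set hIr (hnn r) hsub.eventuallyLE
    have harith : c₀ * N ^ (2 * (l : ℝ) - r - 1)
        ≤ (2 * (N + 1) / Real.pi) ^ (2 * l) * ((N + 1)⁻¹ ^ (r + 1) / (r + 1)) := by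
      have h1 : (2 * (N + 1) / Real.pi) ^ (2 * l)
          = (2 / Real.pi) ^ (2 * l) * (N + 1) ^ ((2 * l : ℕ) : ℝ) := by
        rw [Real.rpow_natCast, ← mul_pow]
        congr 1
        field_simp
      have h2 : (N + 1)⁻¹ ^ (r + 1) = (N + 1) ^ (-(r + 1)) := by
        rw [Real.inv_rpow hN1'.le, ← Real.rpow_neg hN1'.le]
      have hcast : ((2 * l : ℕ) : ℝ) = 2 * (l : ℝ) := by push_cast; ring
      have hprod : (N + 1) ^ (2 * (l : ℝ)) * (N + 1) ^ (-(r + 1))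
          = (N + 1) ^ (2 * (l : ℝ) - r - 1) := by
        rw [← Real.rpow_add hN1']
        congr 1
        ring
      calc c₀ * N ^ (2 * (l : ℝ) - r - 1)
          ≤ c₀ * (N + 1) ^ (2 * (l : ℝ) - r - 1) := by
            apply mul_le_mul_of_nonneg_left
              (Real.rpow_le_rpow hN0.le (by linarith) (by linarith)) hc₀0.le
        _ = (2 / Real.pi) ^ (2 * l) * (N + 1) ^ ((2 * l : ℕ) : ℝ)
              * ((N + 1) ^ (-(r + 1)) / (r + 1)) := by
            rw [hcast, ← hprod, hc₀]; ring
        _ = (2 * (N + 1) / Real.pi) ^ (2 * l) * ((N + 1)⁻¹ ^ (r + 1) / (r + 1)) := by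
            rw [h1, h2]
    calc c₀ * N ^ (2 * (l : ℝ) - r - 1)
        ≤ (2 * (N + 1) / Real.pi) ^ (2 * l) * ((N + 1)⁻¹ ^ (r + 1) / (r + 1)) := harith
      _ = _ := step1.symm
      _ ≤ _ := step0
      _ ≤ _ := step2
  -- Final assembly
  set Bint : ℝ := ∫ t in Set.Ioo (0 : ℝ) Real.pi,
      (Real.sin ((N + 1) * t / 2) / Real.sin (t / 2)) ^ (2 * l) * t ^ r with hBint
  have hNd : N ^ d = N ^ (-(s - r)) * N ^ (2 * (l : ℝ) - r - 1) := by
    rw [← Real.rpow_add hN0]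
    congr 1
    rw [hd]; ring
  have hXpos : (0 : ℝ) < N ^ (-(s - r)) := Real.rpow_pos_of_pos hN0 _
  have hYpos : (0 : ℝ) < N ^ (2 * (l : ℝ) - r - 1) := Real.rpow_pos_of_pos hN0 _
  have hPpos : (0 : ℝ) < Real.pi ^ (2 * l) := by positivity
  have h6 := mul_le_mul_of_nonneg_left hBlow
    (show (0 : ℝ) ≤ Real.pi ^ (2 * l) * N ^ (-(s - r)) * d by positivity)
  have h5 : Real.pi ^ (2 * l) * (N ^ d / d)
      ≤ Real.pi ^ (2 * l) / (d * c₀) * N ^ (-(s - r)) * Bint := by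
    have e1 : Real.pi ^ (2 * l) * (N ^ d / d)
        = (Real.pi ^ (2 * l) * N ^ (-(s - r)) * d
            * (c₀ * N ^ (2 * (l : ℝ) - r - 1))) / (d * d * c₀) := by
      rw [hNd]
      field_simp
    have e2 : Real.pi ^ (2 * l) / (d * c₀) * N ^ (-(s - r)) * Bint
        = (Real.pi ^ (2 * l) * N ^ (-(s - r)) * d * Bint) / (d * d * c₀) := by
      field_simp
    rw [e1, e2]
    apply div_le_div_of_nonneg_right ?_ (by positivity)
    exact h6
  have hsum := add_le_add hT1 (hT2.trans h5)
  rw [hA]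
  have hfin : N ^ (-(s - r)) * Bint
        + Real.pi ^ (2 * l) / (d * c₀) * N ^ (-(s - r)) * Bint
      = (1 + Real.pi ^ (2 * l) / (d * c₀)) * N ^ (-(s - r)) * Bint := by ring
  linarith [hsum]
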